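/- Fix positive reals e0, s0 with e0 ≠ s0, and for each K_M > 0 define λ(K_M) = ½(e0+K_M+s0) − ½√((e0+K_M+s0)² − 4e0·s0) and ε_(K_M) = K_M/(e0 − λ(K_M)). Then as K_M → 0⁺: if s0 < e0 then ε_(K_M) → 0, while if s0 > e0 then ε_(K_M) → (s0 − e0)/e0. -/

import Mathlib

/-- limiting behaviour of the reverse-QSSA small parameter
ε_(K_M) = K_M/(e0 − λ(K_M)) as K_M → 0⁺. -/
theorem rQSSA_eps_limit (e0 s0 : ℝ) (he0 : 0 < e0) (hs0 : 0 < s0) (hne : e0 ≠ s0) :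
    (s0 < e0 →
      Filter.Tendsto
        (fun KM : ℝ => KM / (e0 -
          ((e0 + KM + s0) / 2 - Real.sqrt ((e0 + KM + s0) ^ 2 - 4 * e0 * s0) / 2)))
        (nhdsWithin 0 (Set.Ioi 0)) (nhds 0)) ∧
    (e0 < s0 →
      Filter.Tendsto
        (fun KM : ℝ => KM / (e0 -
          ((e0 + KM + s0) / 2 - Real.sqrt ((e0 + KM + s0) ^ 2 - 4 * e0 * s0) / 2)))
        (nhdsWithin 0 (Set.Ioi 0)) (nhds ((s0 - e0) / e0))) := by
  have hcont : Continuous (fun KM : ℝ =>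
      e0 - ((e0 + KM + s0) / 2 - Real.sqrt ((e0 + KM + s0) ^ 2 - 4 * e0 * s0) / 2)) := by
    fun_prop
  constructor
  · intro hlt
    have hsq : Real.sqrt ((e0 + 0 + s0) ^ 2 - 4 * e0 * s0) = e0 - s0 := by
      have : (e0 + 0 + s0) ^ 2 - 4 * e0 * s0 = (e0 - s0) ^ 2 := by ring
      rw [this, Real.sqrt_sq (by linarith)]
    have hden : Filter.Tendsto (fun KM : ℝ =>
        e0 - ((e0 + KM + s0) / 2 - Real.sqrt ((e0 + KM + s0) ^ 2 - 4 * e0 * s0) / 2))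
        (nhdsWithin 0 (Set.Ioi 0)) (nhds (e0 - s0)) := by
      have h := (hcont.tendsto 0).mono_left (nhdsWithin_le_nhds (s := Set.Ioi 0))
      have h0 : e0 - ((e0 + (0:ℝ) + s0) / 2 - Real.sqrt ((e0 + 0 + s0) ^ 2 - 4 * e0 * s0) / 2)
          = e0 - s0 := by rw [hsq]; ring
      rw [h0] at h
      exact h
    have hnum : Filter.Tendsto (fun KM : ℝ => KM) (nhdsWithin 0 (Set.Ioi 0)) (nhds 0) :=
      Filter.tendsto_id.mono_left nhdsWithin_le_nhds
    have := hnum.div hden (by linarith : e0 - s0 ≠ 0)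
    rw [zero_div] at this
    exact this
  · intro hlt
    -- Rewrite the function as (D + (s0 + KM - e0)) / (2 * e0) on Ioi 0.
    have heq : ∀ KM ∈ Set.Ioi (0:ℝ),
        KM / (e0 - ((e0 + KM + s0) / 2 - Real.sqrt ((e0 + KM + s0) ^ 2 - 4 * e0 * s0) / 2))
        = (Real.sqrt ((e0 + KM + s0) ^ 2 - 4 * e0 * s0) + (s0 + KM - e0)) / (2 * e0) := by
      intro KM hKM
      have hKM : 0 < KM := hKM
      set D := Real.sqrt ((e0 + KM + s0) ^ 2 - 4 * e0 * s0) with hD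
      have harg : (e0 + KM + s0) ^ 2 - 4 * e0 * s0 = (s0 + KM - e0) ^ 2 + 4 * e0 * KM := by
        ring
      have hD2 : D ^ 2 = (s0 + KM - e0) ^ 2 + 4 * e0 * KM := by
        rw [hD, Real.sq_sqrt (by nlinarith)]
        linarith [harg]
      have ha : 0 < s0 + KM - e0 := by linarith
      have hDgt : s0 + KM - e0 < D := by
        rw [hD, show (e0 + KM + s0) ^ 2 - 4 * e0 * s0 = (s0 + KM - e0) ^ 2 + 4 * e0 * KM from harg]
        rw [show (s0 + KM - e0) ^ 2 + 4 * e0 * KM = ((s0 + KM - e0) ^ 2 + 4 * e0 * KM) from rfl]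
        exact (Real.lt_sqrt ha.le).mpr (by nlinarith)
      have hdenpos : 0 < e0 - ((e0 + KM + s0) / 2 - D / 2) := by linarith
      rw [div_eq_div_iff (ne_of_gt hdenpos) (by positivity)]
      nlinarith [hD2]
    have hsq : Real.sqrt ((e0 + 0 + s0) ^ 2 - 4 * e0 * s0) = s0 - e0 := by
      have : (e0 + 0 + s0) ^ 2 - 4 * e0 * s0 = (s0 - e0) ^ 2 := by ring
      rw [this, Real.sqrt_sq (by linarith)]
    have hcont2 : Continuous (fun KM : ℝ =>
        (Real.sqrt ((e0 + KM + s0) ^ 2 - 4 * e0 * s0) + (s0 + KM - e0)) / (2 * e0)) := by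
      fun_prop
    have hlim : Filter.Tendsto (fun KM : ℝ =>
        (Real.sqrt ((e0 + KM + s0) ^ 2 - 4 * e0 * s0) + (s0 + KM - e0)) / (2 * e0))
        (nhdsWithin 0 (Set.Ioi 0)) (nhds ((s0 - e0) / e0)) := by
      have h := (hcont2.tendsto 0).mono_left (nhdsWithin_le_nhds (s := Set.Ioi 0))
      have hval : (Real.sqrt ((e0 + (0:ℝ) + s0) ^ 2 - 4 * e0 * s0) + (s0 + 0 - e0)) / (2 * e0)
          = (s0 - e0) / e0 := by
        rw [hsq]; field_simp; ring
      rw [hval] at h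
      exact h
    refine hlim.congr' ?_
    filter_upwards [self_mem_nhdsWithin] with KM hKM
    exact (heq KM hKM).symm
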